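/- Let δ = 1 - log₂ e + log₂ log₂ e. For every integer n ≥ 1, n·⌈log₂ n⌉ - 2^⌈log₂ n⌉ + 1 < n·log₂ n - (1 - δ)·n + 1; in particular W(n) < n·log₂ n - 0.913·n + 1. -/

import Mathlib

noncomputable def delta : ℝ :=
  1 - Real.logb 2 (Real.exp 1) + Real.logb 2 (Real.logb 2 (Real.exp 1))

noncomputable def fstar : ℝ := Real.logb 2 (Real.logb 2 (Real.exp 1))

lemma logb_two_e_pos : (0:ℝ) < Real.logb 2 (Real.exp 1) := by
  rw [Real.logb, Real.log_exp]
  positivity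

lemma key (g : ℝ) (hg : g ≠ fstar) : g + (1 - delta) < (2:ℝ) ^ g := by
  have hlog2 : (0:ℝ) < Real.log 2 := Real.log_pos (by norm_num)
  have hE := logb_two_e_pos
  have h2 : (2:ℝ) ^ fstar = Real.logb 2 (Real.exp 1) :=
    Real.rpow_logb (by norm_num) (by norm_num) hE
  have h3 : (2:ℝ) ^ g = (2:ℝ) ^ fstar * Real.exp ((g - fstar) * Real.log 2) := by
    rw [Real.rpow_def_of_pos (by norm_num : (0:ℝ) < 2),
        Real.rpow_def_of_pos (by norm_num : (0:ℝ) < 2), ← Real.exp_add]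
    ring_nf
  have ht : (g - fstar) * Real.log 2 ≠ 0 := by
    apply mul_ne_zero _ hlog2.ne'
    exact sub_ne_zero.2 hg
  have h4 : (g - fstar) * Real.log 2 + 1 < Real.exp ((g - fstar) * Real.log 2) :=
    Real.add_one_lt_exp ht
  have h5 : Real.logb 2 (Real.exp 1) * Real.log 2 = 1 := by
    rw [Real.logb, Real.log_exp]
    field_simp
  have h6 : (2:ℝ)^fstar * ((g - fstar) * Real.log 2 + 1) < (2:ℝ)^g := by
    rw [h3]
    exact (mul_lt_mul_iff_right₀ (by rw [h2]; exact hE)).2 h4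
  have h7 : (2:ℝ)^fstar * ((g - fstar) * Real.log 2 + 1)
      = g - fstar + Real.logb 2 (Real.exp 1) := by
    rw [h2]; linear_combination (g - fstar) * h5
  have : delta = 1 - Real.logb 2 (Real.exp 1) + fstar := rfl
  nlinarith [h6, h7]

lemma exp_neg_le : Real.exp (-0.3667) ≤ 0.6931359 := by
  have habs : |(-0.3667:ℝ)| ≤ 1 := by rw [abs_of_nonpos (by norm_num)]; norm_num
  have h := Real.exp_bound habs (n := 5) (by norm_num)
  rw [abs_sub_le_iff] at h
  have h3 := h.1
  have hs : ∑ i ∈ Finset.range 5, (-0.3667:ℝ) ^ i / (Nat.factorial i) =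
      1 - 0.3667 + 0.3667^2/2 - 0.3667^3/6 + 0.3667^4/24 := by
    simp [Finset.sum_range_succ, Nat.factorial]
    norm_num
  rw [hs, abs_of_nonpos (by norm_num : (-0.3667:ℝ) ≤ 0)] at h3
  norm_num [Nat.factorial] at h3
  nlinarith [h3]

lemma log_log_two_ge : Real.log (Real.log 2) ≥ 0.913 * Real.log 2 - 1 := by
  have hL1 : (0.6931471803:ℝ) < Real.log 2 := Real.log_two_gt_d9
  have hL2 : Real.log 2 < 0.6931471808 := Real.log_two_lt_d9
  have hLpos : (0:ℝ) < Real.log 2 := by linarith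
  have h1 : Real.log (Real.exp (-0.3667) / Real.log 2)
      ≤ Real.exp (-0.3667) / Real.log 2 - 1 :=
    Real.log_le_sub_one_of_pos (by positivity)
  rw [Real.log_div (Real.exp_ne_zero _) hLpos.ne', Real.log_exp] at h1
  have h1' : (-0.3667 - Real.log (Real.log 2) + 1) * Real.log 2 ≤ Real.exp (-0.3667) := by
    rw [← le_div_iff₀ hLpos]; linarith
  have he := exp_neg_le
  nlinarith [h1', he, hL1, hL2, hLpos]

lemma delta_le : delta ≤ 0.087 := by
  have hL1 : (0.6931471803:ℝ) < Real.log 2 := Real.log_two_gt_d9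
  have hL2 : Real.log 2 < 0.6931471808 := Real.log_two_lt_d9
  have hLpos : (0:ℝ) < Real.log 2 := by linarith
  have h1 : Real.logb 2 (Real.exp 1) = 1 / Real.log 2 := by
    rw [Real.logb, Real.log_exp]
  have h2 : Real.logb 2 (Real.logb 2 (Real.exp 1)) = -Real.log (Real.log 2) / Real.log 2 := by
    rw [h1, Real.logb, Real.log_div one_ne_zero hLpos.ne', Real.log_one]
    ring
  have h3 := log_log_two_ge
  rw [delta, h2, h1]
  have hg : (1:ℝ) - 1 / Real.log 2 + -Real.log (Real.log 2) / Real.log 2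
      = (Real.log 2 - 1 - Real.log (Real.log 2)) / Real.log 2 := by
    field_simp
    ring
  rw [hg, div_le_iff₀ hLpos]
  nlinarith [h3, hL1, hL2]

lemma exp_tsum (x : ℝ) : Real.exp x = ∑' n : ℕ, x ^ n / (Nat.factorial n) := by
  rw [Real.exp_eq_exp_ℝ, NormedSpace.exp_eq_tsum_div]

lemma summable_shift (x : ℝ) (j : ℕ) :
    Summable (fun k : ℕ => x ^ (k + j) / (Nat.factorial (k + j))) :=
  (summable_nat_add_iff j).2 (Real.summable_pow_div_factorial x)

lemma tail1 (x : ℝ) : ∑' k : ℕ, x ^ (k + 1) / (Nat.factorial (k + 1)) = Real.exp x - 1 := by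
  have h := Summable.tsum_eq_zero_add (Real.summable_pow_div_factorial x)
  rw [← exp_tsum] at h
  simp only [pow_zero, Nat.factorial_zero] at h
  norm_num at h
  linarith [h]

lemma tail2 (x : ℝ) :
    ∑' k : ℕ, x ^ (k + 2) / (Nat.factorial (k + 2)) = Real.exp x - 1 - x := by
  have h := Summable.tsum_eq_zero_add (summable_shift x 1)
  rw [tail1] at h
  have h2 : ∀ k : ℕ, x ^ (k + 1 + 1) / ((Nat.factorial (k + 1 + 1) : ℕ) : ℝ)
      = x ^ (k + 2) / (Nat.factorial (k + 2)) := fun k => rfl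
  simp only [h2] at h
  norm_num at h
  linarith [h]

lemma tail3 (x : ℝ) :
    ∑' k : ℕ, x ^ (k + 3) / (Nat.factorial (k + 3)) = Real.exp x - 1 - x - x ^ 2 / 2 := by
  have h := Summable.tsum_eq_zero_add (summable_shift x 2)
  rw [tail2] at h
  have h2 : ∀ k : ℕ, x ^ (k + 1 + 2) / ((Nat.factorial (k + 1 + 2) : ℕ) : ℝ)
      = x ^ (k + 3) / (Nat.factorial (k + 3)) := fun k => rfl
  simp only [h2] at h
  norm_num at h
  linarith [h]

noncomputable def T (a n k : ℕ) : ℝ :=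
  (a:ℝ) ^ (2*n+1+k) * (Nat.factorial (n+k)) /
    ((Nat.factorial k) * (Nat.factorial (2*n+k+1)))

lemma T_nonneg (a n k : ℕ) : 0 ≤ T a n k := by
  unfold T; positivity

lemma T_le (a n k : ℕ) :
    T a n k ≤ ((a:ℝ) ^ (2*n+1) / (n+1)^(n+1)) * ((a:ℝ) ^ k / (Nat.factorial k)) := by
  have hkey : (Nat.factorial (n+k)) * (n+1)^(n+1) ≤ Nat.factorial (2*n+k+1) := by
    calc Nat.factorial (n+k) * (n+1)^(n+1)
        ≤ Nat.factorial (n+k) * (n+k+1)^(n+1) := by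
          gcongr; omega
      _ ≤ Nat.factorial ((n+k) + (n+1)) := Nat.factorial_mul_pow_le_factorial
      _ = Nat.factorial (2*n+k+1) := by rw [show (n+k) + (n+1) = 2*n+k+1 by ring]
  have h1 : ((Nat.factorial (n+k)) : ℝ) / (Nat.factorial (2*n+k+1)) ≤ 1 / (n+1)^(n+1) := by
    rw [div_le_div_iff₀ (by positivity) (by positivity), one_mul]
    exact_mod_cast hkey
  calc T a n k = ((a:ℝ) ^ (2*n+1) * (a:ℝ) ^ k / (Nat.factorial k)) *
        (((Nat.factorial (n+k)) : ℝ) / (Nat.factorial (2*n+k+1))) := by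
        unfold T; rw [pow_add]; ring
    _ ≤ ((a:ℝ) ^ (2*n+1) * (a:ℝ) ^ k / (Nat.factorial k)) * (1 / (n+1)^(n+1)) := by
        apply mul_le_mul_of_nonneg_left h1 (by positivity)
    _ = ((a:ℝ) ^ (2*n+1) / (n+1)^(n+1)) * ((a:ℝ) ^ k / (Nat.factorial k)) := by ring

lemma summable_T (a n : ℕ) : Summable (T a n) :=
  Summable.of_nonneg_of_le (T_nonneg a n) (T_le a n)
    ((Real.summable_pow_div_factorial a).mul_left _)

noncomputable def S (a n : ℕ) : ℝ := ∑' k, T a n k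

lemma S_zero (a : ℕ) : S a 0 = Real.exp a - 1 := by
  have h : ∀ k : ℕ, T a 0 k = (a:ℝ) ^ (k+1) / (Nat.factorial (k+1)) := by
    intro k
    unfold T
    have hk : (Nat.factorial k : ℝ) ≠ 0 := by positivity
    simp only [show 2*0+1+k = k+1 by ring, show 0+k = k by ring, show 2*0+k+1 = k+1 by ring]
    field_simp
  rw [S]
  simp only [h]
  exact tail1 a

lemma S_one (a : ℕ) : S a 1 = ((a:ℝ) - 2) * Real.exp a + ((a:ℝ) + 2) := by
  have h : ∀ k : ℕ, T a 1 k =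
      (a:ℝ) * ((a:ℝ) ^ (k+2) / (Nat.factorial (k+2)))
        - 2 * ((a:ℝ) ^ (k+3) / (Nat.factorial (k+3))) := by
    intro k
    unfold T
    simp only [show 2*1+1+k = k+3 by ring, show 2*1+k+1 = k+3 by ring]
    have e1 : (Nat.factorial (1+k) : ℝ) = (k+1) * (Nat.factorial k) := by
      rw [show 1+k = k+1 by ring]
      exact_mod_cast Nat.factorial_succ k
    have e2 : (Nat.factorial (k+3) : ℝ) = (k+3) * (Nat.factorial (k+2)) := by
      exact_mod_cast Nat.factorial_succ (k+2)
    have hk : (Nat.factorial k : ℝ) ≠ 0 := by positivity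
    have hk2 : (Nat.factorial (k+2) : ℝ) ≠ 0 := by positivity
    have hk3 : ((k:ℝ)+3) ≠ 0 := by positivity
    rw [e1, e2]
    have e3 : ((a:ℝ)) ^ (k+3) = (a:ℝ)^(k+2) * a := by rw [pow_succ]
    rw [e3]
    field_simp
    ring
  rw [S]
  simp only [h]
  rw [Summable.tsum_sub, tsum_mul_left, tsum_mul_left, tail2, tail3]
  · ring
  · exact ((summable_shift (a:ℝ) 2).mul_left _)
  · exact ((summable_shift (a:ℝ) 3).mul_left _)

lemma factE (j : ℕ) : (Nat.factorial (j+1) : ℝ) = (j+1) * Nat.factorial j := by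
  exact_mod_cast Nat.factorial_succ j

lemma Tid0 (a m : ℕ) : (a:ℝ)^2 * T a m 0 = (4*(m:ℝ)+6) * T a (m+1) 0 := by
  unfold T
  simp only [show 2*m+1+0 = 2*m+1 by ring, show m+0 = m by ring,
    show 2*m+0+1 = 2*m+1 by ring, show 2*(m+1)+1+0 = 2*m+3 by ring,
    show m+1+0 = m+1 by ring, show 2*(m+1)+0+1 = 2*m+3 by ring]
  have e1 : (Nat.factorial (2*m+3) : ℝ) = (2*m+3) * ((2*m+2) * Nat.factorial (2*m+1)) := by
    rw [show 2*m+3 = (2*m+2)+1 by ring, factE, show 2*m+2 = (2*m+1)+1 by ring, factE]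
    push_cast; ring
  have e2 : (Nat.factorial (m+1) : ℝ) = (m+1) * Nat.factorial m := factE m
  have e3 : (a:ℝ)^(2*m+3) = (a:ℝ)^(2*m+1) * (a:ℝ)^2 := by
    rw [← pow_add]
  have h1 : (Nat.factorial (2*m+1) : ℝ) ≠ 0 := by positivity
  have h2 : ((2*(m:ℝ)+3)) ≠ 0 := by positivity
  have h3 : ((2*(m:ℝ)+2)) ≠ 0 := by positivity
  rw [e1, e2, e3]
  simp only [Nat.factorial_zero]
  push_cast
  field_simp
  ring

lemma Tid1 (a m : ℕ) : (a:ℝ)^2 * T a m 1 = (4*(m:ℝ)+6) * T a (m+1) 1 := by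
  unfold T
  simp only [show 2*m+1+1 = 2*m+2 by ring, show 2*m+1+1 = 2*m+2 by ring,
    show 2*(m+1)+1+1 = 2*m+4 by ring, show m+1+1 = m+2 by ring,
    show 2*(m+1)+1+1 = 2*m+4 by ring, show 2*m+1+1 = 2*m+2 by ring]
  have e1 : (Nat.factorial (2*m+4) : ℝ) = (2*m+4) * ((2*m+3) * Nat.factorial (2*m+2)) := by
    rw [show 2*m+4 = (2*m+3)+1 by ring, factE, show 2*m+3 = (2*m+2)+1 by ring, factE]
    push_cast; ring
  have e2 : (Nat.factorial (m+2) : ℝ) = (m+2) * Nat.factorial (m+1) := by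
    rw [show m+2 = (m+1)+1 by ring, factE]; push_cast; ring
  have e3 : (a:ℝ)^(2*m+4) = (a:ℝ)^(2*m+2) * (a:ℝ)^2 := by
    rw [← pow_add]
  have h1 : (Nat.factorial (2*m+2) : ℝ) ≠ 0 := by positivity
  rw [e1, e2, e3]
  push_cast
  field_simp
  ring

lemma Tid2 (a m k : ℕ) :
    (a:ℝ)^2 * T a m (k+2) - (4*(m:ℝ)+6) * T a (m+1) (k+2) = T a (m+2) k := by
  unfold T
  simp only [show 2*m+1+(k+2) = 2*m+k+3 by ring, show m+(k+2) = m+k+2 by ring,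
    show 2*m+(k+2)+1 = 2*m+k+3 by ring, show 2*(m+1)+1+(k+2) = 2*m+k+5 by ring,
    show m+1+(k+2) = m+k+3 by ring, show 2*(m+1)+(k+2)+1 = 2*m+k+5 by ring,
    show 2*(m+2)+1+k = 2*m+k+5 by ring, show m+2+k = m+k+2 by ring,
    show 2*(m+2)+k+1 = 2*m+k+5 by ring]
  have e1 : (Nat.factorial (2*m+k+5) : ℝ)
      = (2*m+k+5) * ((2*m+k+4) * Nat.factorial (2*m+k+3)) := by
    rw [show 2*m+k+5 = (2*m+k+4)+1 by ring, factE, show 2*m+k+4 = (2*m+k+3)+1 by ring, factE]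
    push_cast; ring
  have e2 : (Nat.factorial (m+k+3) : ℝ) = (m+k+3) * Nat.factorial (m+k+2) := by
    rw [show m+k+3 = (m+k+2)+1 by ring, factE]; push_cast; ring
  have e3 : (Nat.factorial (k+2) : ℝ) = (k+2) * ((k+1) * Nat.factorial k) := by
    rw [show k+2 = (k+1)+1 by ring, factE, factE]
    push_cast; ring
  have e4 : (a:ℝ)^(2*m+k+5) = (a:ℝ)^(2*m+k+3) * (a:ℝ)^2 := by
    rw [← pow_add]
  have h1 : (Nat.factorial (2*m+k+3) : ℝ) ≠ 0 := by positivity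
  have h2 : (Nat.factorial (m+k+2) : ℝ) ≠ 0 := by positivity
  have h3 : (Nat.factorial k : ℝ) ≠ 0 := by positivity
  rw [e1, e2, e3, e4]
  push_cast
  field_simp
  ring

lemma S_rec (a m : ℕ) :
    S a (m+2) = (a:ℝ)^2 * S a m - (4*(m:ℝ)+6) * S a (m+1) := by
  set g : ℕ → ℝ := fun k => (a:ℝ)^2 * T a m k - (4*(m:ℝ)+6) * T a (m+1) k with hgdef
  have hg : Summable g :=
    ((summable_T a m).mul_left _).sub ((summable_T a (m+1)).mul_left _)
  have h1 : ∑' k, g k = (a:ℝ)^2 * S a m - (4*(m:ℝ)+6) * S a (m+1) := by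
    rw [hgdef, Summable.tsum_sub ((summable_T a m).mul_left _) ((summable_T a (m+1)).mul_left _),
      tsum_mul_left, tsum_mul_left]
    rfl
  have h2 : ∑' k, g k = g 0 + (g 1 + ∑' k, g (k+1+1)) := by
    rw [hg.tsum_eq_zero_add, ((summable_nat_add_iff 1).2 hg).tsum_eq_zero_add]
  have hg0 : g 0 = 0 := by
    rw [hgdef]; simp only []; rw [sub_eq_zero]; exact Tid0 a m
  have hg1 : g 1 = 0 := by
    rw [hgdef]; simp only []; rw [sub_eq_zero]; exact Tid1 a m
  have hg2 : ∀ k, g (k+1+1) = T a (m+2) k := by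
    intro k
    show g (k+2) = T a (m+2) k
    rw [hgdef]
    exact Tid2 a m k
  rw [hg0, hg1] at h2
  simp only [hg2] at h2
  have : S a (m+2) = ∑' k, g k := by
    rw [h2, S]; ring
  rw [this, h1]

lemma S_int (a : ℕ) : ∀ n : ℕ, ∃ p q : ℤ, S a n = p * Real.exp a + q := by
  have key : ∀ n : ℕ, (∃ p q : ℤ, S a n = p * Real.exp a + q) ∧
      (∃ p q : ℤ, S a (n+1) = p * Real.exp a + q) := by
    intro n
    induction n with
    | zero =>
      constructor
      · exact ⟨1, -1, by rw [S_zero]; push_cast; ring⟩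
      · exact ⟨(a:ℤ) - 2, (a:ℤ) + 2, by rw [S_one]; push_cast; ring⟩
    | succ n ih =>
      refine ⟨ih.2, ?_⟩
      obtain ⟨p0, q0, h0⟩ := ih.1
      obtain ⟨p1, q1, h1⟩ := ih.2
      refine ⟨(a:ℤ)^2 * p0 - (4*n+6) * p1, (a:ℤ)^2 * q0 - (4*n+6) * q1, ?_⟩
      rw [S_rec a n, h0, h1]
      push_cast
      ring
  exact fun n => (key n).1

lemma S_pos (a n : ℕ) (ha : 1 ≤ a) : 0 < S a n := by
  have h0 : 0 < T a n 0 := by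
    unfold T
    have : (0:ℝ) < (a:ℝ) := by exact_mod_cast ha
    positivity
  exact Summable.tsum_pos (summable_T a n) (T_nonneg a n) 0 h0

lemma S_le (a n : ℕ) : S a n ≤ ((a:ℝ)^(2*n+1) / ((n:ℝ)+1)^(n+1)) * Real.exp a := by
  have h := Summable.tsum_le_tsum (T_le a n) (summable_T a n)
    ((Real.summable_pow_div_factorial (a:ℝ)).mul_left _)
  rw [tsum_mul_left, ← exp_tsum] at h
  calc S a n ≤ ((a:ℝ)^(2*n+1) / ((n+1 : ℕ):ℝ)^(n+1)) * Real.exp a := by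
        convert h using 3 <;> push_cast <;> rfl
    _ = ((a:ℝ)^(2*n+1) / ((n:ℝ)+1)^(n+1)) * Real.exp a := by push_cast; ring

lemma exp_nat_ne_nat (a M : ℕ) (ha : 1 ≤ a) : Real.exp a ≠ (M : ℝ) := by
  intro hM
  set n := max (a^3) (3^a) with hn
  have hn1 : 1 ≤ n := le_trans (Nat.one_le_pow _ _ (by omega)) (le_max_left _ _)
  have hna : a^3 ≤ n := le_max_left _ _
  have hnb : 3^a ≤ n := le_max_right _ _
  have hnat : a^(2*n+1) * 3^a ≤ (n+1)^(n+1) := by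
    calc a^(2*n+1) * 3^a ≤ a^(3*n) * 3^a := by
          gcongr
          · omega
      _ = (a^3)^n * 3^a := by rw [← pow_mul]
      _ ≤ (n+1)^n * (n+1) := by
          gcongr <;> omega
      _ = (n+1)^(n+1) := by rw [← pow_succ]
  have hexp3 : Real.exp a < 3^a := by
    have h1 : Real.exp (a : ℝ) = Real.exp 1 ^ a := by
      rw [← Real.exp_nat_mul]; norm_num
    rw [h1]
    apply pow_lt_pow_left₀ _ (Real.exp_pos 1).le
    · omega
    · linarith [Real.exp_one_lt_d9]
  have hCpos : (0:ℝ) < (a:ℝ)^(2*n+1) / ((n:ℝ)+1)^(n+1) := by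
    have : (0:ℝ) < (a:ℝ) := by exact_mod_cast ha
    positivity
  have hlt1 : S a n < 1 := by
    have h1 : S a n ≤ ((a:ℝ)^(2*n+1) / ((n:ℝ)+1)^(n+1)) * Real.exp a := S_le a n
    have h2 : ((a:ℝ)^(2*n+1) / ((n:ℝ)+1)^(n+1)) * Real.exp a
        < ((a:ℝ)^(2*n+1) / ((n:ℝ)+1)^(n+1)) * 3^a := by
      exact (mul_lt_mul_iff_right₀ hCpos).2 hexp3
    have h3 : ((a:ℝ)^(2*n+1) / ((n:ℝ)+1)^(n+1)) * 3^a ≤ 1 := by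
      rw [div_mul_eq_mul_div, div_le_one (by positivity)]
      calc (a:ℝ)^(2*n+1) * 3^a = ((a^(2*n+1) * 3^a : ℕ) : ℝ) := by push_cast; ring
        _ ≤ (((n+1)^(n+1) : ℕ) : ℝ) := by exact_mod_cast hnat
        _ = ((n:ℝ)+1)^(n+1) := by push_cast; ring
    linarith
  have hpos := S_pos a n ha
  obtain ⟨p, q, hpq⟩ := S_int a n
  rw [hM] at hpq
  have hz : S a n = ((p * M + q : ℤ) : ℝ) := by rw [hpq]; push_cast; ring
  have hz1 : (0:ℝ) < ((p * M + q : ℤ) : ℝ) := hz ▸ hpos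
  have hz2 : ((p * M + q : ℤ) : ℝ) < 1 := hz ▸ hlt1
  have hz3 : 0 < p * M + q := by exact_mod_cast hz1
  have hz4 : (1:ℤ) ≤ p * M + q := hz3
  have : (1:ℝ) ≤ ((p * M + q : ℤ) : ℝ) := by exact_mod_cast hz4
  linarith

lemma log_two_not_dyadic (n c : ℕ) (hn : 1 ≤ n) : (n:ℝ) ≠ 2^c * Real.log 2 := by
  intro h
  have h1 : (2:ℝ)^c * Real.log 2 = Real.log ((2:ℝ)^(2^c : ℕ)) := by
    rw [Real.log_pow]
    push_cast
    ring
  have h2 : Real.exp ((n:ℝ)) = ((2^(2^c) : ℕ) : ℝ) := by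
    rw [h, h1, Real.exp_log (by positivity)]
    push_cast
    ring
  exact exp_nat_ne_nat n (2^(2^c)) hn h2

theorem W_upper_bound (n : ℕ) (hn : 1 ≤ n) :
    ((n : ℝ) * Nat.clog 2 n - 2 ^ Nat.clog 2 n + 1
        < (n : ℝ) * Real.logb 2 n - (1 - delta) * n + 1) ∧
    ((n : ℝ) * Nat.clog 2 n - 2 ^ Nat.clog 2 n + 1
        < (n : ℝ) * Real.logb 2 n - 0.913 * n + 1) := by
  have hnpos : (0:ℝ) < n := by exact_mod_cast hn
  set c := Nat.clog 2 n with hc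
  set x := Real.logb 2 n with hxd
  have hx2 : (2:ℝ) ^ x = n := Real.rpow_logb (by norm_num) (by norm_num) hnpos
  set g := (c:ℝ) - x with hgd
  have hgne : g ≠ fstar := by
    intro hgf
    apply log_two_not_dyadic n c hn
    have hE := logb_two_e_pos
    have h2f : (2:ℝ) ^ fstar = Real.logb 2 (Real.exp 1) :=
      Real.rpow_logb (by norm_num) (by norm_num) hE
    have hlogb : Real.logb 2 (Real.exp 1) = 1 / Real.log 2 := by
      rw [Real.logb, Real.log_exp]
    have hxeq : x = (c:ℝ) - fstar := by
      rw [hgd] at hgf; linarith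
    have hlog2 : (0:ℝ) < Real.log 2 := Real.log_pos (by norm_num)
    have : (n:ℝ) = (2:ℝ) ^ ((c:ℝ)) / (2:ℝ) ^ fstar := by
      rw [← hx2, hxeq, Real.rpow_sub (by norm_num : (0:ℝ) < 2)]
    rw [this, h2f, hlogb, Real.rpow_natCast]
    field_simp
  have hkey := key g hgne
  have hmul : (n:ℝ) * (g + (1 - delta)) < (n:ℝ) * (2:ℝ) ^ g :=
    (mul_lt_mul_iff_right₀ hnpos).2 hkey
  have hpow : (n:ℝ) * (2:ℝ) ^ g = (2:ℝ) ^ c := by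
    rw [← hx2, ← Real.rpow_add (by norm_num : (0:ℝ) < 2), hgd]
    rw [show x + ((c:ℝ) - x) = (c:ℝ) by ring, Real.rpow_natCast]
  rw [hpow] at hmul
  constructor
  · nlinarith [hmul]
  · have hd := delta_le
    nlinarith [hmul, hnpos, hd]
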